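/- arXiv:2106.00631 — 3 statements merged into one kernel-verified Lean document; each statement's English description precedes it below -/
import Mathlib

section
/- Let Γ be an abelian subgroup of the isometry group of a compact metric space X acting minimally on X. Then the closure of Γ in the isometry group acts freely on X: if u, w are in the closure of Γ and u x = w x for some x ∈ X, then u = w. -/
/-- Let `Γ` be an abelian subgroup of the isometry group of a compact metric
space `X` acting minimally on `X`. Then the closure of `Γ` (taken in
`C(X, X)` with the topology of uniform convergence) acts freely on `X`: if
`u, w` lie in the closure of `Γ` and `u x = w x` for some `x ∈ X`, then
`u = w`. -/
theorem settled_stmt3 {X : Type*} [MetricSpace X] [CompactSpace X]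
    (Γ : Subgroup (X ≃ᵢ X))
    (habel : ∀ g h : X ≃ᵢ X, g ∈ Γ → h ∈ Γ → g * h = h * g)
    (hmin : ∀ x : X, Dense {y : X | ∃ g ∈ Γ, g x = y})
    (u w : C(X, X))
    (hu : u ∈ closure
      ((fun g : X ≃ᵢ X => (⟨⇑g, g.continuous⟩ : C(X, X))) '' (Γ : Set (X ≃ᵢ X))))
    (hw : w ∈ closure
      ((fun g : X ≃ᵢ X => (⟨⇑g, g.continuous⟩ : C(X, X))) '' (Γ : Set (X ≃ᵢ X))))
    (x : X) (hx : u x = w x) :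
    u = w := by
  -- Every element of the closure commutes with every element of Γ.
  have key : ∀ g : X ≃ᵢ X, g ∈ Γ → ∀ v : C(X, X),
      v ∈ closure ((fun g : X ≃ᵢ X => (⟨⇑g, g.continuous⟩ : C(X, X))) ''
        (Γ : Set (X ≃ᵢ X))) →
      ∀ y : X, v (g y) = g (v y) := by
    intro g hg v hv
    set gC : C(X, X) := ⟨⇑g, g.continuous⟩
    have hc : IsClosed {f : C(X, X) | f.comp gC = gC.comp f} :=
      isClosed_eq (ContinuousMap.continuous_precomp gC)
        (ContinuousMap.continuous_postcomp gC)
    have hsub : ((fun g : X ≃ᵢ X => (⟨⇑g, g.continuous⟩ : C(X, X))) ''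
        (Γ : Set (X ≃ᵢ X))) ⊆ {f : C(X, X) | f.comp gC = gC.comp f} := by
      rintro _ ⟨h, hh, rfl⟩
      have := habel h g hh hg
      ext y
      have : (h * g) y = (g * h) y := by rw [this]
      simpa [gC] using this
    have := closure_minimal hsub hc hv
    intro y
    exact DFunLike.congr_fun this y
  -- The function y ↦ dist (u y) (w y) is Γ-invariant.
  have hdist : ∀ g : X ≃ᵢ X, g ∈ Γ → ∀ y : X,
      dist (u (g y)) (w (g y)) = dist (u y) (w y) := by
    intro g hg y
    rw [key g hg u hu y, key g hg w hw y, g.isometry.dist_eq]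
  -- It vanishes on the dense orbit of x, hence everywhere.
  have hzero : ∀ y : X, dist (u y) (w y) = 0 := by
    have hcl : IsClosed {y : X | dist (u y) (w y) = 0} :=
      isClosed_eq (by fun_prop) continuous_const
    have : {y : X | ∃ g ∈ Γ, g x = y} ⊆ {y : X | dist (u y) (w y) = 0} := by
      rintro _ ⟨g, hg, rfl⟩
      show dist (u (g x)) (w (g x)) = 0
      rw [hdist g hg x, hx, dist_self]
    have hd : Dense {y : X | dist (u y) (w y) = 0} := (hmin x).mono this
    intro y
    have : y ∈ {y : X | dist (u y) (w y) = 0} := by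
      rw [← hcl.closure_eq, hd.closure_eq]; trivial
    exact this
  ext y
  exact dist_eq_zero.mp (hzero y)
end

section
/- Let a be a minimal automorphism of a spherically homogeneous rooted tree T (the cyclic group generated by a acts transitively on each vertex level V_n). Then the closure of ⟨a⟩ in Aut(T) is a maximal closed abelian subgroup acting freely and transitively on the boundary ∂T; more precisely, any closed subgroup B of Aut(T) containing the closure of ⟨a⟩ and acting freely on ∂T equals the closure of ⟨a⟩. -/
/-- The boundary of the spherically homogeneous rooted tree with spherical
index `m`: infinite paths are sequences `x` with `x n ∈ {0, …, m n - 1}`. -/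
abbrev Bd (m : ℕ → ℕ) : Type := ∀ n : ℕ, Fin (m n)

/-- A permutation of the boundary is a tree automorphism iff it preserves the
relation "agree on the first `N` coordinates" (i.e. it permutes each vertex
level preserving the tree structure). -/
def IsTreeAut {m : ℕ → ℕ} (e : Equiv.Perm (Bd m)) : Prop :=
  ∀ (N : ℕ) (x y : Bd m), (∀ n < N, x n = y n) ↔ (∀ n < N, e x n = e y n)

/-- The automorphism group of the spherically homogeneous rooted tree with
spherical index `m`, realized as a subgroup of the permutations of the
boundary. -/
def treeAutGroup (m : ℕ → ℕ) : Subgroup (Equiv.Perm (Bd m)) where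
  carrier := {e | IsTreeAut e}
  one_mem' := fun _ _ _ => Iff.rfl
  mul_mem' := by
    intro a b ha hb N x y
    exact (hb N x y).trans (ha N (b x) (b y))
  inv_mem' := by
    intro a ha N x y
    have h := ha N (a⁻¹ x) (a⁻¹ y)
    simpa using h.symm

/-- The orbit of `x` under the cyclic group generated by `a`. -/
def orbitZ {m : ℕ → ℕ} (a : Equiv.Perm (Bd m)) (x : Bd m) : Set (Bd m) :=
  {y | ∃ k : ℤ, (a ^ k) x = y}

/-- `a` acts transitively on every vertex level `V n` (vertices at level `n`
are identified with length-`n` prefixes of boundary points). -/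
def LevelTransitive {m : ℕ → ℕ} (a : Equiv.Perm (Bd m)) : Prop :=
  ∀ (n : ℕ) (x y : Bd m), ∃ k : ℤ, ∀ i < n, ((a ^ k) x) i = y i

/-- `f` belongs to the closure of the set `Γ` of tree automorphisms in the
profinite (= uniform) topology on `Aut(T)`: for every level `n` there is an
element of `Γ` agreeing with `f` up to level `n` everywhere. -/
def InClosure {m : ℕ → ℕ} (Γ : Set (Equiv.Perm (Bd m))) (f : Bd m → Bd m) : Prop :=
  ∀ n : ℕ, ∃ g ∈ Γ, ∀ x : Bd m, ∀ i < n, f x i = g x i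

lemma tree_fix_all {m : ℕ → ℕ} (a : Equiv.Perm (Bd m)) (ha : a ∈ treeAutGroup m)
    (hamin : LevelTransitive a) (t : ℤ) (p : ℕ) (x : Bd m)
    (hx : ∀ i < p, (a ^ t) x i = x i) :
    ∀ z : Bd m, ∀ i < p, (a ^ t) z i = z i := by
  intro z
  obtain ⟨s, hs⟩ := hamin p x z
  have hat : IsTreeAut (a ^ t) := (treeAutGroup m).zpow_mem ha t
  have has : IsTreeAut (a ^ s) := (treeAutGroup m).zpow_mem ha s
  have h1 : ∀ i < p, (a ^ t) ((a ^ s) x) i = (a ^ t) z i := (hat p ((a ^ s) x) z).mp hs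
  have h2 : ∀ i < p, (a ^ s) ((a ^ t) x) i = (a ^ s) x i := (has p ((a ^ t) x) x).mp hx
  intro i hi
  have hc : (a ^ t) ((a ^ s) x) = (a ^ s) ((a ^ t) x) := by
    rw [← Equiv.Perm.mul_apply, ← Equiv.Perm.mul_apply, ← zpow_add, ← zpow_add, add_comm]
  calc (a ^ t) z i = (a ^ t) ((a ^ s) x) i := (h1 i hi).symm
    _ = (a ^ s) ((a ^ t) x) i := by rw [hc]
    _ = (a ^ s) x i := h2 i hi
    _ = z i := hs i hi

lemma tree_agree {m : ℕ → ℕ} (a : Equiv.Perm (Bd m)) (ha : a ∈ treeAutGroup m)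
    (hamin : LevelTransitive a) (j l : ℤ) (p : ℕ) (x : Bd m)
    (hx : ∀ i < p, (a ^ j) x i = (a ^ l) x i) :
    ∀ z : Bd m, ∀ i < p, (a ^ j) z i = (a ^ l) z i := by
  have hkey : ∀ i < p, (a ^ (j - l)) ((a ^ l) x) i = (a ^ l) x i := by
    intro i hi
    have h : (a ^ (j - l)) ((a ^ l) x) = (a ^ j) x := by
      rw [← Equiv.Perm.mul_apply, ← zpow_add, sub_add_cancel]
    rw [h]; exact hx i hi
  intro z i hi
  have h := tree_fix_all a ha hamin (j - l) p ((a ^ l) x) hkey ((a ^ l) z) i hi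
  rwa [← Equiv.Perm.mul_apply, ← zpow_add, sub_add_cancel] at h

/-- Let `a` be a minimal automorphism of a spherically homogeneous rooted tree.
Then the closure of `⟨a⟩` in `Aut(T)` acts freely and transitively on the
boundary, and it is a maximal such group: any closed subgroup `B` of `Aut(T)`
containing the closure of `⟨a⟩` and acting freely on the boundary equals the
closure of `⟨a⟩`. -/
theorem settled_stmt4 {m : ℕ → ℕ} (hm : ∀ n, 2 ≤ m n)
    (a : Equiv.Perm (Bd m)) (ha : a ∈ treeAutGroup m) (hamin : LevelTransitive a)
    (B : Subgroup (Equiv.Perm (Bd m))) (hBaut : B ≤ treeAutGroup m)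
    (hBclosed : ∀ f : Bd m → Bd m, InClosure (B : Set (Equiv.Perm (Bd m))) f →
      ∃ g ∈ B, ⇑g = f)
    (hBcontain : ∀ f : Bd m → Bd m,
      InClosure ((Subgroup.zpowers a : Subgroup (Equiv.Perm (Bd m))) : Set (Equiv.Perm (Bd m))) f →
      ∃ g ∈ B, ⇑g = f)
    (hBfree : ∀ g ∈ B, (∃ x : Bd m, g x = x) → g = 1) :
    -- the closure of ⟨a⟩ acts transitively on the boundary …
    (∀ x y : Bd m, ∃ f : Bd m → Bd m,
        InClosure ((Subgroup.zpowers a : Subgroup (Equiv.Perm (Bd m))) : Set (Equiv.Perm (Bd m))) f ∧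
        f x = y) ∧
    -- … and freely …
    (∀ f g : Bd m → Bd m,
        InClosure ((Subgroup.zpowers a : Subgroup (Equiv.Perm (Bd m))) : Set (Equiv.Perm (Bd m))) f →
        InClosure ((Subgroup.zpowers a : Subgroup (Equiv.Perm (Bd m))) : Set (Equiv.Perm (Bd m))) g →
        (∃ x : Bd m, f x = g x) → f = g) ∧
    -- … and B coincides with the closure of ⟨a⟩.
    (fun g : Equiv.Perm (Bd m) => ⇑g) '' (B : Set (Equiv.Perm (Bd m))) =
      {f : Bd m → Bd m |
        InClosure ((Subgroup.zpowers a : Subgroup (Equiv.Perm (Bd m))) : Set (Equiv.Perm (Bd m))) f} := by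
  have trans : ∀ x y : Bd m, ∃ f : Bd m → Bd m,
      InClosure ((Subgroup.zpowers a : Subgroup (Equiv.Perm (Bd m))) : Set (Equiv.Perm (Bd m))) f ∧
      f x = y := by
    intro x y
    choose k hk using fun n => hamin n x y
    refine ⟨fun z i => (a ^ k (i + 1)) z i, ?_, ?_⟩
    · intro n
      refine ⟨a ^ k n, Subgroup.zpow_mem _ (Subgroup.mem_zpowers a) _, ?_⟩
      intro z i hi
      have hagree : ∀ i' < i + 1, (a ^ k (i + 1)) x i' = (a ^ k n) x i' := by
        intro i' hi'
        rw [hk (i + 1) i' hi', hk n i' (lt_of_lt_of_le hi' hi)]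
      exact tree_agree a ha hamin (k (i + 1)) (k n) (i + 1) x hagree z i (Nat.lt_succ_self i)
    · funext i
      exact hk (i + 1) i (Nat.lt_succ_self i)
  have free : ∀ f g : Bd m → Bd m,
      InClosure ((Subgroup.zpowers a : Subgroup (Equiv.Perm (Bd m))) : Set (Equiv.Perm (Bd m))) f →
      InClosure ((Subgroup.zpowers a : Subgroup (Equiv.Perm (Bd m))) : Set (Equiv.Perm (Bd m))) g →
      (∃ x : Bd m, f x = g x) → f = g := by
    intro f g hf hg ⟨x, hx⟩
    funext z; funext i
    obtain ⟨gf, hgfmem, hgf⟩ := hf (i + 1)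
    obtain ⟨gg, hggmem, hgg⟩ := hg (i + 1)
    obtain ⟨j, hj⟩ := Subgroup.mem_zpowers_iff.mp hgfmem
    obtain ⟨l, hl⟩ := Subgroup.mem_zpowers_iff.mp hggmem
    have hagree : ∀ i' < i + 1, (a ^ j) x i' = (a ^ l) x i' := by
      intro i' hi'
      rw [hj, hl, ← hgf x i' hi', ← hgg x i' hi', hx]
    have h := tree_agree a ha hamin j l (i + 1) x hagree z i (Nat.lt_succ_self i)
    rw [hj, hl] at h
    rw [hgf z i (Nat.lt_succ_self i), hgg z i (Nat.lt_succ_self i), h]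
  refine ⟨trans, free, ?_⟩
  have x0 : Bd m := fun n => ⟨0, lt_of_lt_of_le two_pos (hm n)⟩
  ext f
  constructor
  · rintro ⟨b, hb, rfl⟩
    obtain ⟨f', hf', hf'x⟩ := trans x0 (b x0)
    obtain ⟨c, hc, hcf⟩ := hBcontain f' hf'
    have hfix : (c⁻¹ * b) x0 = x0 := by
      have : b x0 = c x0 := by rw [← hf'x, ← hcf]
      simp [Equiv.Perm.mul_apply, this]
    have h1 : c⁻¹ * b = 1 := hBfree _ (mul_mem (inv_mem hc) hb) ⟨x0, hfix⟩
    have hbc : b = c := (inv_mul_eq_one.mp h1).symm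
    show InClosure _ (⇑b)
    rw [hbc, hcf]
    exact hf'
  · intro hf
    obtain ⟨g, hg, hgf⟩ := hBcontain f hf
    exact ⟨g, hg, hgf⟩
end

section
/- Let σ be an automorphism of a d-ary rooted tree T, n ≥ 1, and v ∈ V_n a vertex in a cycle of σ|V_n of length k. Then v is in a stable cycle of length k if and only if the union X = ⋃_{j=1}^{k} σ^j([v]) of the cylinder sets above the cycle is a minimal component of the dynamical system (∂T, σ). -/
variable {d : ℕ}

/-- The vertex `v` (identified with any boundary point passing through it)
lies in a cycle of length `k` of the restriction of `σ` to the level-`n`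
vertices of the `d`-ary tree. -/
def InCycle (σ : Equiv.Perm (Bd (fun _ => d))) (n k : ℕ) (v : Bd (fun _ => d)) : Prop :=
  0 < k ∧ (∀ i < n, ((σ ^ k) v) i = v i) ∧
    ∀ j, 0 < j → j < k → ¬ (∀ i < n, ((σ ^ j) v) i = v i)

/-- `x` passes through a level-`n` vertex lying above the cycle of the
level-`n` vertex of `v`. -/
def AboveCycle (σ : Equiv.Perm (Bd (fun _ => d))) (n : ℕ) (v x : Bd (fun _ => d)) : Prop :=
  ∃ j : ℕ, ∀ i < n, x i = ((σ ^ j) v) i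

/-- The vertex of `v` at level `n` lies in a *stable* cycle of length `k` of
`σ`: it lies in a cycle of length `k`, and for every level `m > n` all the
vertices of level `m` lying above this cycle are in one single cycle of the
restriction of `σ` to level `m` (necessarily of length `d^(m-n) * k`). -/
def InStableCycle (σ : Equiv.Perm (Bd (fun _ => d))) (n k : ℕ) (v : Bd (fun _ => d)) : Prop :=
  InCycle σ n k v ∧
    ∀ mlev, n < mlev → ∀ x y : Bd (fun _ => d), AboveCycle σ n v x → AboveCycle σ n v y →
      ∃ t : ℕ, ∀ i < mlev, ((σ ^ t) x) i = y i

/-- A level-`n` vertex `w` of the `d`-ary tree is in a stable cycle of `σ`. -/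
def StableVertex (σ : Equiv.Perm (Bd (fun _ => d))) (n : ℕ) (w : Fin n → Fin d) : Prop :=
  ∃ v : Bd (fun _ => d), (∀ i : Fin n, v (i : ℕ) = w i) ∧ ∃ k : ℕ, InStableCycle σ n k v

/-- `σ` is settled: the proportion of level-`n` vertices lying in stable
cycles of `σ` tends to `1` as `n → ∞`. -/
def SettledAut (σ : Equiv.Perm (Bd (fun _ => d))) : Prop :=
  Filter.Tendsto
    (fun n : ℕ => (Nat.card {w : Fin n → Fin d // StableVertex σ n w} : ℝ) /
      (Fintype.card (Fin n → Fin d) : ℝ))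
    Filter.atTop (nhds 1)

/-- `σ` is strongly settled: from some level `n ≥ 1` on, every vertex lies in
a stable cycle of `σ`. -/
def StronglySettledAut (σ : Equiv.Perm (Bd (fun _ => d))) : Prop :=
  ∃ n : ℕ, 0 < n ∧ ∀ w : Fin n → Fin d, StableVertex σ n w

/-- A minimal component of the dynamical system `(∂T, σ)`: a nonempty closed
`σ`-invariant set on which every `σ`-orbit is dense. -/
def IsMinimalComponent (σ : Equiv.Perm (Bd (fun _ => d))) (X : Set (Bd (fun _ => d))) : Prop :=
  X.Nonempty ∧ IsClosed X ∧ ⇑σ '' X = X ∧ ∀ x ∈ X, closure (orbitZ σ x) = X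

section Helpers

variable {d : ℕ}

lemma aut_agree {g : Equiv.Perm (Bd (fun _ => d))} (hg : g ∈ treeAutGroup (fun _ => d))
    {N : ℕ} {x y : Bd (fun _ => d)} (h : ∀ i < N, x i = y i) :
    ∀ i < N, g x i = g y i := (hg N x y).1 h

lemma image_cyl {g : Equiv.Perm (Bd (fun _ => d))} (hg : g ∈ treeAutGroup (fun _ => d))
    (n : ℕ) (c : Bd (fun _ => d)) :
    ⇑g '' {x | ∀ i < n, x i = c i} = {x | ∀ i < n, x i = g c i} := by
  ext x
  constructor
  · rintro ⟨w, hw, rfl⟩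
    exact aut_agree hg hw
  · intro hx
    refine ⟨g⁻¹ x, ?_, by simp⟩
    have := aut_agree ((treeAutGroup _).inv_mem hg) hx
    simpa using this

lemma cyl_closed (n : ℕ) (c : Bd (fun _ => d)) :
    IsClosed {x : Bd (fun _ => d) | ∀ i < n, x i = c i} := by
  have h : {x : Bd (fun _ => d) | ∀ i < n, x i = c i}
      = ⋂ i : Fin n, (fun x : Bd (fun _ => d) => x (i : ℕ)) ⁻¹' {c (i : ℕ)} := by
    ext x
    simp only [Set.mem_setOf_eq, Set.mem_iInter, Set.mem_preimage, Set.mem_singleton_iff]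
    exact ⟨fun h i => h i i.2, fun h i hi => h ⟨i, hi⟩⟩
  rw [h]
  exact isClosed_iInter fun i => isClosed_singleton.preimage (continuous_apply _)

lemma cyl_open (n : ℕ) (c : Bd (fun _ => d)) :
    IsOpen {x : Bd (fun _ => d) | ∀ i < n, x i = c i} := by
  have h : {x : Bd (fun _ => d) | ∀ i < n, x i = c i}
      = ⋂ i : Fin n, (fun x : Bd (fun _ => d) => x (i : ℕ)) ⁻¹' {c (i : ℕ)} := by
    ext x
    simp only [Set.mem_setOf_eq, Set.mem_iInter, Set.mem_preimage, Set.mem_singleton_iff]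
    exact ⟨fun h i => h i i.2, fun h i hi => h ⟨i, hi⟩⟩
  rw [h]
  exact isOpen_iInter_of_finite fun i => (isOpen_discrete _).preimage (continuous_apply _)

lemma exists_cyl_subset {U : Set (Bd (fun _ => d))} (hU : IsOpen U) {y : Bd (fun _ => d)}
    (hy : y ∈ U) : ∃ N, {z : Bd (fun _ => d) | ∀ i < N, z i = y i} ⊆ U := by
  obtain ⟨V, ⟨W, F, hW, rfl⟩, hyV, hVU⟩ :=
    (isTopologicalBasis_pi
      (fun i : ℕ => TopologicalSpace.isTopologicalBasis_opens)).exists_subset_of_mem_open hy hU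
  refine ⟨F.sup id + 1, fun z hz => hVU ?_⟩
  intro i hiF
  have hzi : z i = y i := hz i (Nat.lt_succ_of_le (Finset.le_sup (f := id) hiF))
  rw [hzi]
  exact hyV i hiF

lemma exists_nat_pow_agree {σ : Equiv.Perm (Bd (fun _ => d))}
    (hσ : σ ∈ treeAutGroup (fun _ => d)) (x : Bd (fun _ => d)) (N : ℕ) (t : ℤ) :
    ∃ s : ℕ, ∀ i < N, ((σ ^ t) x) i = ((σ ^ s) x) i := by
  have main : ∀ a b : ℕ, a < b →
      (∀ i < N, ((σ ^ (b : ℤ)) x) i = ((σ ^ (a : ℤ)) x) i) →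
      ∃ s : ℕ, ∀ i < N, ((σ ^ t) x) i = ((σ ^ s) x) i := by
    intro a b hab hper
    set p : ℤ := (b : ℤ) - a with hp
    have hp1 : 1 ≤ p := by omega
    have step : ∀ u : ℤ, ∀ i < N, ((σ ^ (u + p)) x) i = ((σ ^ u) x) i := by
      intro u
      have h1 : (σ ^ (u + p)) x = (σ ^ (u - a)) ((σ ^ (b : ℤ)) x) := by
        rw [← Equiv.Perm.mul_apply, ← zpow_add]
        congr 1
        rw [hp]; ring_nf
      have h2 : (σ ^ u) x = (σ ^ (u - a)) ((σ ^ (a : ℤ)) x) := by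
        rw [← Equiv.Perm.mul_apply, ← zpow_add]
        congr 1
        ring_nf
      rw [h1, h2]
      exact aut_agree ((treeAutGroup _).zpow_mem hσ _) hper
    have iter : ∀ m : ℕ, ∀ i < N, ((σ ^ (t + p * m)) x) i = ((σ ^ t) x) i := by
      intro m
      induction m with
      | zero => simp
      | succ m ih =>
        intro i hi
        have he : t + p * ((m : ℤ) + 1) = (t + p * m) + p := by ring
        push_cast
        rw [he]
        exact (step (t + p * m) i hi).trans (ih i hi)
    set m := t.natAbs with hm
    have hnn : 0 ≤ t + p * m := by
      have h1 : (m : ℤ) ≤ p * m := le_mul_of_one_le_left (by positivity) hp1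
      omega
    refine ⟨(t + p * m).toNat, fun i hi => ?_⟩
    have : ((σ ^ ((t + p * m).toNat : ℤ)) x) i = ((σ ^ t) x) i := by
      rw [Int.toNat_of_nonneg hnn]
      exact iter m i hi
    rw [← zpow_natCast σ ((t + p * m).toNat)]
    exact this.symm
  obtain ⟨a, b, hab, hfab⟩ := Finite.exists_ne_map_eq_of_infinite
    (fun t : ℕ => fun i : Fin N => ((σ ^ t) x) i)
  have hfab' : ∀ i < N, ((σ ^ (a : ℤ)) x) i = ((σ ^ (b : ℤ)) x) i := by
    intro i hi
    have := congrFun hfab ⟨i, hi⟩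
    simpa [zpow_natCast] using this
  rcases hab.lt_or_gt with h | h
  · exact main a b h (fun i hi => (hfab' i hi).symm)
  · exact main b a h hfab'

end Helpers

/-- Let `σ` be an automorphism of the `d`-ary rooted tree, `n ≥ 1`, and let
`v` be (a boundary point through) a vertex of level `n` lying in a cycle of
`σ|V n` of length `k`. Then `v` is in a stable cycle of length `k` if and
only if the union `X = ⋃_{j=1}^{k} σ^j [v]` of the cylinder sets above the
cycle is a minimal component of the dynamical system `(∂T, σ)`. -/
theorem settled_stmt13 (d : ℕ) (hd : 2 ≤ d)
    (σ : Equiv.Perm (Bd (fun _ => d))) (hσ : σ ∈ treeAutGroup (fun _ => d))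
    (n : ℕ) (hn : 1 ≤ n) (v : Bd (fun _ => d)) (k : ℕ)
    (hcyc : InCycle σ n k v) :
    InStableCycle σ n k v ↔
      IsMinimalComponent σ
        (⋃ j ∈ Finset.Icc 1 k, ⇑(σ ^ j) '' {x : Bd (fun _ => d) | ∀ i < n, x i = v i}) := by
  classical
  set X := ⋃ j ∈ Finset.Icc 1 k, ⇑(σ ^ j) '' {x : Bd (fun _ => d) | ∀ i < n, x i = v i}
    with hXdef
  have hk := hcyc.1
  have hper0 := hcyc.2.1
  have hpow : ∀ j : ℕ, (σ ^ j) ∈ treeAutGroup (fun _ => d) := fun j =>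
    (treeAutGroup _).pow_mem hσ j
  -- cylinders
  set C : ℕ → Set (Bd (fun _ => d)) := fun j => {x | ∀ i < n, x i = ((σ ^ j) v) i} with hCdef
  have hXC : X = ⋃ j ∈ Finset.Icc 1 k, C j := by
    rw [hXdef]
    refine Set.iUnion₂_congr fun j _ => ?_
    exact image_cyl (hpow j) n v
  -- periodicity of v at level n
  have period_v : ∀ j : ℕ, ∀ i < n, ((σ ^ (j + k)) v) i = ((σ ^ j) v) i := by
    intro j
    have he : (σ ^ (j + k)) v = (σ ^ j) ((σ ^ k) v) := by
      rw [pow_add, Equiv.Perm.mul_apply]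
    rw [he]
    exact aut_agree (hpow j) hper0
  have mod_red : ∀ j : ℕ, ∃ j', j' ∈ Finset.Icc 1 k ∧
      ∀ i < n, ((σ ^ j) v) i = ((σ ^ j') v) i := by
    intro j
    induction j using Nat.strong_induction_on with
    | _ j ih =>
      rcases Nat.lt_or_ge j 1 with hj | hj
      · refine ⟨k, Finset.mem_Icc.2 ⟨hk, le_rfl⟩, ?_⟩
        interval_cases j
        intro i hi
        simpa using (hper0 i hi).symm
      · rcases le_or_gt j k with hjk | hjk
        · exact ⟨j, Finset.mem_Icc.2 ⟨hj, hjk⟩, fun _ _ => rfl⟩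
        · obtain ⟨j', hj', hagree⟩ := ih (j - k) (by omega)
          refine ⟨j', hj', fun i hi => ?_⟩
          have := period_v (j - k) i hi
          rw [Nat.sub_add_cancel (by omega)] at this
          exact this.trans (hagree i hi)
  have memX : ∀ x : Bd (fun _ => d),
      x ∈ X ↔ ∃ j : ℕ, ∀ i < n, x i = ((σ ^ j) v) i := by
    intro x
    rw [hXC]
    simp only [Set.mem_iUnion, exists_prop]
    constructor
    · rintro ⟨j, hj, hx⟩
      exact ⟨j, hx⟩
    · rintro ⟨j, hx⟩
      obtain ⟨j', hj', hagree⟩ := mod_red j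
      exact ⟨j', hj', fun i hi => (hx i hi).trans (hagree i hi)⟩
  have hXclosed : IsClosed X := by
    rw [hXC]
    exact (Finset.Icc 1 k).finite_toSet.isClosed_biUnion fun j _ => cyl_closed n _
  constructor
  · rintro ⟨-, hstab⟩
    refine ⟨⟨σ v, (memX _).2 ⟨1, by simp⟩⟩, hXclosed, ?_, ?_⟩
    · -- invariance
      ext x
      constructor
      · rintro ⟨w, hw, rfl⟩
        obtain ⟨j, hj⟩ := (memX w).1 hw
        refine (memX _).2 ⟨j + 1, ?_⟩
        have he : (σ ^ (j + 1)) v = σ ((σ ^ j) v) := by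
          rw [pow_succ', Equiv.Perm.mul_apply]
        rw [he]
        exact aut_agree hσ hj
      · intro hx
        obtain ⟨j, hj⟩ := (memX x).1 hx
        refine ⟨σ⁻¹ x, ?_, by simp⟩
        refine (memX _).2 ⟨j + k - 1, ?_⟩
        have hj' : ∀ i < n, x i = ((σ ^ (j + k)) v) i := fun i hi =>
          (hj i hi).trans (period_v j i hi).symm
        have hinv := aut_agree ((treeAutGroup _).inv_mem hσ) hj'
        intro i hi
        have he : σ⁻¹ ((σ ^ (j + k)) v) = (σ ^ (j + k - 1)) v := by
          have : (σ ^ (j + k)) v = σ ((σ ^ (j + k - 1)) v) := by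
            rw [← Equiv.Perm.mul_apply, ← pow_succ']
            congr 2
            omega
          rw [this, ← Equiv.Perm.mul_apply, inv_mul_cancel, Equiv.Perm.one_apply]
        rw [← he]
        exact hinv i hi
    · -- minimality
      intro x hx
      obtain ⟨j, hj⟩ := (memX x).1 hx
      apply subset_antisymm
      · refine closure_minimal ?_ hXclosed
        rintro z ⟨t, rfl⟩
        obtain ⟨s, hs⟩ := exists_nat_pow_agree hσ x n t
        refine (memX _).2 ⟨s + j, fun i hi => ?_⟩
        have he : (σ ^ (s + j)) v = (σ ^ s) ((σ ^ j) v) := by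
          rw [pow_add, Equiv.Perm.mul_apply]
        rw [he]
        exact (hs i hi).trans (aut_agree (hpow s) hj i hi)
      · intro y hy
        obtain ⟨jy, hjy⟩ := (memX y).1 hy
        rw [mem_closure_iff]
        intro U hU hyU
        obtain ⟨N, hN⟩ := exists_cyl_subset hU hyU
        obtain ⟨t, ht⟩ := hstab (max N (n + 1)) (lt_of_lt_of_le (Nat.lt_succ_self n)
          (le_max_right _ _)) x y ⟨j, hj⟩ ⟨jy, hjy⟩
        refine ⟨(σ ^ t) x, hN fun i hi => ht i (lt_of_lt_of_le hi (le_max_left _ _)), ?_⟩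
        exact ⟨(t : ℤ), by rw [zpow_natCast]⟩
  · rintro ⟨-, -, -, hmin⟩
    refine ⟨hcyc, ?_⟩
    intro mlev _ x y hax hay
    have hxX : x ∈ X := (memX x).2 hax
    have hyX : y ∈ X := (memX y).2 hay
    have hyc : y ∈ closure (orbitZ σ x) := by rw [hmin x hxX]; exact hyX
    obtain ⟨z, hzC, t, rfl⟩ := mem_closure_iff.1 hyc
      {z : Bd (fun _ => d) | ∀ i < mlev, z i = y i} (cyl_open mlev y) (fun _ _ => rfl)
    obtain ⟨s, hs⟩ := exists_nat_pow_agree hσ x mlev t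
    exact ⟨s, fun i hi => (hs i hi).symm.trans (hzC i hi)⟩
end
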